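/- Define the K-cross product on ℝ³ by u ×_K v := det(L) L⁻¹K⁻¹L⁻¹(u × v), where K and L are invertible symmetric 3×3 matrices. Then (u ×_K v)^K = [û^K, v̂^K] (matrix commutator), i.e. the map u ↦ û^K := K⁻¹(Lu)^ is a Lie algebra isomorphism from (ℝ³, ×_K) to (𝔰𝔬(K), [·,·]). -/

import Mathlib

open Matrix

noncomputable def hat3 (u : Fin 3 → ℝ) : Matrix (Fin 3) (Fin 3) ℝ :=
  !![0, -u 2, u 1; u 2, 0, -u 0; -u 1, u 0, 0]

lemma hat3_smul (c : ℝ) (x : Fin 3 → ℝ) : hat3 (c • x) = c • hat3 x := by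
  ext i j; fin_cases i <;> fin_cases j <;> simp [hat3]

lemma hat3_inj {x y : Fin 3 → ℝ} (h : hat3 x = hat3 y) : x = y := by
  funext i
  fin_cases i
  · simpa [hat3] using congrFun (congrFun h 2) 1
  · simpa [hat3] using congrFun (congrFun h 0) 2
  · simpa [hat3] using congrFun (congrFun h 1) 0

lemma mat3_ext {A B : Matrix (Fin 3) (Fin 3) ℝ}
    (h00 : A 0 0 = B 0 0) (h01 : A 0 1 = B 0 1) (h02 : A 0 2 = B 0 2)
    (h10 : A 1 0 = B 1 0) (h11 : A 1 1 = B 1 1) (h12 : A 1 2 = B 1 2)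
    (h20 : A 2 0 = B 2 0) (h21 : A 2 1 = B 2 1) (h22 : A 2 2 = B 2 2) : A = B := by
  ext i j
  fin_cases i <;> fin_cases j <;> assumption

set_option maxHeartbeats 2000000 in
lemma core00 (K L : Matrix (Fin 3) (Fin 3) ℝ)
    (k01 : K 1 0 = K 0 1) (k02 : K 2 0 = K 0 2) (k12 : K 2 1 = K 1 2)
    (l01 : L 1 0 = L 0 1) (l02 : L 2 0 = L 0 2) (l12 : L 2 1 = L 1 2)
    (u v : Fin 3 → ℝ) :
    (adjugate K * hat3 ((adjugate K * adjugate L).mulVec (crossProduct u v))) 0 0 =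
    (adjugate K * hat3 (L.mulVec u) * (adjugate K * hat3 (L.mulVec v)) -
    adjugate K * hat3 (L.mulVec v) * (adjugate K * hat3 (L.mulVec u))) 0 0 := by
  simp only [hat3, adjugate_fin_three, mulVec, cross_apply, Matrix.mul_apply,
    Fin.sum_univ_three, Matrix.sub_apply, Matrix.cons_val_zero, Matrix.cons_val_one,
    Matrix.head_cons, Matrix.cons_val_two, Matrix.tail_cons, Matrix.head_fin_const,
    Matrix.cons_val', Matrix.cons_val_fin_one, Matrix.empty_val', dotProduct,
    Matrix.of_apply, Pi.sub_apply]
  rw [k01, k02, k12, l01, l02, l12]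
  ring

set_option maxHeartbeats 2000000 in
lemma core01 (K L : Matrix (Fin 3) (Fin 3) ℝ)
    (k01 : K 1 0 = K 0 1) (k02 : K 2 0 = K 0 2) (k12 : K 2 1 = K 1 2)
    (l01 : L 1 0 = L 0 1) (l02 : L 2 0 = L 0 2) (l12 : L 2 1 = L 1 2)
    (u v : Fin 3 → ℝ) :
    (adjugate K * hat3 ((adjugate K * adjugate L).mulVec (crossProduct u v))) 0 1 =
    (adjugate K * hat3 (L.mulVec u) * (adjugate K * hat3 (L.mulVec v)) -
    adjugate K * hat3 (L.mulVec v) * (adjugate K * hat3 (L.mulVec u))) 0 1 := by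
  simp only [hat3, adjugate_fin_three, mulVec, cross_apply, Matrix.mul_apply,
    Fin.sum_univ_three, Matrix.sub_apply, Matrix.cons_val_zero, Matrix.cons_val_one,
    Matrix.head_cons, Matrix.cons_val_two, Matrix.tail_cons, Matrix.head_fin_const,
    Matrix.cons_val', Matrix.cons_val_fin_one, Matrix.empty_val', dotProduct,
    Matrix.of_apply, Pi.sub_apply]
  rw [k01, k02, k12, l01, l02, l12]
  ring

set_option maxHeartbeats 2000000 in
lemma core02 (K L : Matrix (Fin 3) (Fin 3) ℝ)
    (k01 : K 1 0 = K 0 1) (k02 : K 2 0 = K 0 2) (k12 : K 2 1 = K 1 2)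
    (l01 : L 1 0 = L 0 1) (l02 : L 2 0 = L 0 2) (l12 : L 2 1 = L 1 2)
    (u v : Fin 3 → ℝ) :
    (adjugate K * hat3 ((adjugate K * adjugate L).mulVec (crossProduct u v))) 0 2 =
    (adjugate K * hat3 (L.mulVec u) * (adjugate K * hat3 (L.mulVec v)) -
    adjugate K * hat3 (L.mulVec v) * (adjugate K * hat3 (L.mulVec u))) 0 2 := by
  simp only [hat3, adjugate_fin_three, mulVec, cross_apply, Matrix.mul_apply,
    Fin.sum_univ_three, Matrix.sub_apply, Matrix.cons_val_zero, Matrix.cons_val_one,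
    Matrix.head_cons, Matrix.cons_val_two, Matrix.tail_cons, Matrix.head_fin_const,
    Matrix.cons_val', Matrix.cons_val_fin_one, Matrix.empty_val', dotProduct,
    Matrix.of_apply, Pi.sub_apply]
  rw [k01, k02, k12, l01, l02, l12]
  ring

set_option maxHeartbeats 2000000 in
lemma core10 (K L : Matrix (Fin 3) (Fin 3) ℝ)
    (k01 : K 1 0 = K 0 1) (k02 : K 2 0 = K 0 2) (k12 : K 2 1 = K 1 2)
    (l01 : L 1 0 = L 0 1) (l02 : L 2 0 = L 0 2) (l12 : L 2 1 = L 1 2)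
    (u v : Fin 3 → ℝ) :
    (adjugate K * hat3 ((adjugate K * adjugate L).mulVec (crossProduct u v))) 1 0 =
    (adjugate K * hat3 (L.mulVec u) * (adjugate K * hat3 (L.mulVec v)) -
    adjugate K * hat3 (L.mulVec v) * (adjugate K * hat3 (L.mulVec u))) 1 0 := by
  simp only [hat3, adjugate_fin_three, mulVec, cross_apply, Matrix.mul_apply,
    Fin.sum_univ_three, Matrix.sub_apply, Matrix.cons_val_zero, Matrix.cons_val_one,
    Matrix.head_cons, Matrix.cons_val_two, Matrix.tail_cons, Matrix.head_fin_const,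
    Matrix.cons_val', Matrix.cons_val_fin_one, Matrix.empty_val', dotProduct,
    Matrix.of_apply, Pi.sub_apply]
  rw [k01, k02, k12, l01, l02, l12]
  ring

set_option maxHeartbeats 2000000 in
lemma core11 (K L : Matrix (Fin 3) (Fin 3) ℝ)
    (k01 : K 1 0 = K 0 1) (k02 : K 2 0 = K 0 2) (k12 : K 2 1 = K 1 2)
    (l01 : L 1 0 = L 0 1) (l02 : L 2 0 = L 0 2) (l12 : L 2 1 = L 1 2)
    (u v : Fin 3 → ℝ) :
    (adjugate K * hat3 ((adjugate K * adjugate L).mulVec (crossProduct u v))) 1 1 =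
    (adjugate K * hat3 (L.mulVec u) * (adjugate K * hat3 (L.mulVec v)) -
    adjugate K * hat3 (L.mulVec v) * (adjugate K * hat3 (L.mulVec u))) 1 1 := by
  simp only [hat3, adjugate_fin_three, mulVec, cross_apply, Matrix.mul_apply,
    Fin.sum_univ_three, Matrix.sub_apply, Matrix.cons_val_zero, Matrix.cons_val_one,
    Matrix.head_cons, Matrix.cons_val_two, Matrix.tail_cons, Matrix.head_fin_const,
    Matrix.cons_val', Matrix.cons_val_fin_one, Matrix.empty_val', dotProduct,
    Matrix.of_apply, Pi.sub_apply]
  rw [k01, k02, k12, l01, l02, l12]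
  ring

set_option maxHeartbeats 2000000 in
lemma core12 (K L : Matrix (Fin 3) (Fin 3) ℝ)
    (k01 : K 1 0 = K 0 1) (k02 : K 2 0 = K 0 2) (k12 : K 2 1 = K 1 2)
    (l01 : L 1 0 = L 0 1) (l02 : L 2 0 = L 0 2) (l12 : L 2 1 = L 1 2)
    (u v : Fin 3 → ℝ) :
    (adjugate K * hat3 ((adjugate K * adjugate L).mulVec (crossProduct u v))) 1 2 =
    (adjugate K * hat3 (L.mulVec u) * (adjugate K * hat3 (L.mulVec v)) -
    adjugate K * hat3 (L.mulVec v) * (adjugate K * hat3 (L.mulVec u))) 1 2 := by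
  simp only [hat3, adjugate_fin_three, mulVec, cross_apply, Matrix.mul_apply,
    Fin.sum_univ_three, Matrix.sub_apply, Matrix.cons_val_zero, Matrix.cons_val_one,
    Matrix.head_cons, Matrix.cons_val_two, Matrix.tail_cons, Matrix.head_fin_const,
    Matrix.cons_val', Matrix.cons_val_fin_one, Matrix.empty_val', dotProduct,
    Matrix.of_apply, Pi.sub_apply]
  rw [k01, k02, k12, l01, l02, l12]
  ring

set_option maxHeartbeats 2000000 in
lemma core20 (K L : Matrix (Fin 3) (Fin 3) ℝ)
    (k01 : K 1 0 = K 0 1) (k02 : K 2 0 = K 0 2) (k12 : K 2 1 = K 1 2)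
    (l01 : L 1 0 = L 0 1) (l02 : L 2 0 = L 0 2) (l12 : L 2 1 = L 1 2)
    (u v : Fin 3 → ℝ) :
    (adjugate K * hat3 ((adjugate K * adjugate L).mulVec (crossProduct u v))) 2 0 =
    (adjugate K * hat3 (L.mulVec u) * (adjugate K * hat3 (L.mulVec v)) -
    adjugate K * hat3 (L.mulVec v) * (adjugate K * hat3 (L.mulVec u))) 2 0 := by
  simp only [hat3, adjugate_fin_three, mulVec, cross_apply, Matrix.mul_apply,
    Fin.sum_univ_three, Matrix.sub_apply, Matrix.cons_val_zero, Matrix.cons_val_one,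
    Matrix.head_cons, Matrix.cons_val_two, Matrix.tail_cons, Matrix.head_fin_const,
    Matrix.cons_val', Matrix.cons_val_fin_one, Matrix.empty_val', dotProduct,
    Matrix.of_apply, Pi.sub_apply]
  rw [k01, k02, k12, l01, l02, l12]
  ring

set_option maxHeartbeats 2000000 in
lemma core21 (K L : Matrix (Fin 3) (Fin 3) ℝ)
    (k01 : K 1 0 = K 0 1) (k02 : K 2 0 = K 0 2) (k12 : K 2 1 = K 1 2)
    (l01 : L 1 0 = L 0 1) (l02 : L 2 0 = L 0 2) (l12 : L 2 1 = L 1 2)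
    (u v : Fin 3 → ℝ) :
    (adjugate K * hat3 ((adjugate K * adjugate L).mulVec (crossProduct u v))) 2 1 =
    (adjugate K * hat3 (L.mulVec u) * (adjugate K * hat3 (L.mulVec v)) -
    adjugate K * hat3 (L.mulVec v) * (adjugate K * hat3 (L.mulVec u))) 2 1 := by
  simp only [hat3, adjugate_fin_three, mulVec, cross_apply, Matrix.mul_apply,
    Fin.sum_univ_three, Matrix.sub_apply, Matrix.cons_val_zero, Matrix.cons_val_one,
    Matrix.head_cons, Matrix.cons_val_two, Matrix.tail_cons, Matrix.head_fin_const,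
    Matrix.cons_val', Matrix.cons_val_fin_one, Matrix.empty_val', dotProduct,
    Matrix.of_apply, Pi.sub_apply]
  rw [k01, k02, k12, l01, l02, l12]
  ring

set_option maxHeartbeats 2000000 in
lemma core22 (K L : Matrix (Fin 3) (Fin 3) ℝ)
    (k01 : K 1 0 = K 0 1) (k02 : K 2 0 = K 0 2) (k12 : K 2 1 = K 1 2)
    (l01 : L 1 0 = L 0 1) (l02 : L 2 0 = L 0 2) (l12 : L 2 1 = L 1 2)
    (u v : Fin 3 → ℝ) :
    (adjugate K * hat3 ((adjugate K * adjugate L).mulVec (crossProduct u v))) 2 2 =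
    (adjugate K * hat3 (L.mulVec u) * (adjugate K * hat3 (L.mulVec v)) -
    adjugate K * hat3 (L.mulVec v) * (adjugate K * hat3 (L.mulVec u))) 2 2 := by
  simp only [hat3, adjugate_fin_three, mulVec, cross_apply, Matrix.mul_apply,
    Fin.sum_univ_three, Matrix.sub_apply, Matrix.cons_val_zero, Matrix.cons_val_one,
    Matrix.head_cons, Matrix.cons_val_two, Matrix.tail_cons, Matrix.head_fin_const,
    Matrix.cons_val', Matrix.cons_val_fin_one, Matrix.empty_val', dotProduct,
    Matrix.of_apply, Pi.sub_apply]
  rw [k01, k02, k12, l01, l02, l12]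
  ring

lemma core (K L : Matrix (Fin 3) (Fin 3) ℝ)
    (k01 : K 1 0 = K 0 1) (k02 : K 2 0 = K 0 2) (k12 : K 2 1 = K 1 2)
    (l01 : L 1 0 = L 0 1) (l02 : L 2 0 = L 0 2) (l12 : L 2 1 = L 1 2)
    (u v : Fin 3 → ℝ) :
    adjugate K * hat3 ((adjugate K * adjugate L).mulVec (crossProduct u v)) =
    adjugate K * hat3 (L.mulVec u) * (adjugate K * hat3 (L.mulVec v)) -
    adjugate K * hat3 (L.mulVec v) * (adjugate K * hat3 (L.mulVec u)) :=
  mat3_ext (core00 K L k01 k02 k12 l01 l02 l12 u v) (core01 K L k01 k02 k12 l01 l02 l12 u v) (core02 K L k01 k02 k12 l01 l02 l12 u v)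
    (core10 K L k01 k02 k12 l01 l02 l12 u v) (core11 K L k01 k02 k12 l01 l02 l12 u v) (core12 K L k01 k02 k12 l01 l02 l12 u v)
    (core20 K L k01 k02 k12 l01 l02 l12 u v) (core21 K L k01 k02 k12 l01 l02 l12 u v) (core22 K L k01 k02 k12 l01 l02 l12 u v)

/-- With `u ×_K v := det L · L⁻¹ K⁻¹ L⁻¹ (u × v)` (for invertible symmetric
`K, L`), the hat map `u ↦ û^K := K⁻¹ (L u)^` intertwines `×_K` with the
matrix commutator: `(u ×_K v)^K = [û^K, v̂^K]`, i.e. it is a Lie algebra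
isomorphism `(ℝ³, ×_K) → (𝔰𝔬(K), [·,·])`. -/
theorem stmt14 (K L : Matrix (Fin 3) (Fin 3) ℝ)
    (hK : Kᵀ = K) (hL : Lᵀ = L) (hKdet : IsUnit K.det) (hLdet : IsUnit L.det) :
    let hat : (Fin 3 → ℝ) → Matrix (Fin 3) (Fin 3) ℝ :=
      fun u => !![0, -u 2, u 1; u 2, 0, -u 0; -u 1, u 0, 0]
    let hatK : (Fin 3 → ℝ) → Matrix (Fin 3) (Fin 3) ℝ :=
      fun u => K⁻¹ * hat (L.mulVec u)
    let crossK : (Fin 3 → ℝ) → (Fin 3 → ℝ) → Fin 3 → ℝ :=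
      fun u v => L.det • (L⁻¹ * K⁻¹ * L⁻¹).mulVec (crossProduct u v)
    (∀ u v : Fin 3 → ℝ, hatK (crossK u v) = hatK u * hatK v - hatK v * hatK u) ∧
    Function.Injective hatK ∧
    (∀ ν : Matrix (Fin 3) (Fin 3) ℝ, νᵀ * K + K * ν = 0 → ∃ u, hatK u = ν) := by
  intro hat hatK crossK
  have k01 : K 1 0 = K 0 1 := by conv_lhs => rw [← hK, transpose_apply]
  have k02 : K 2 0 = K 0 2 := by conv_lhs => rw [← hK, transpose_apply]
  have k12 : K 2 1 = K 1 2 := by conv_lhs => rw [← hK, transpose_apply]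
  have l01 : L 1 0 = L 0 1 := by conv_lhs => rw [← hL, transpose_apply]
  have l02 : L 2 0 = L 0 2 := by conv_lhs => rw [← hL, transpose_apply]
  have l12 : L 2 1 = L 1 2 := by conv_lhs => rw [← hL, transpose_apply]
  have hdK : K.det ≠ 0 := hKdet.ne_zero
  have hdL : L.det ≠ 0 := hLdet.ne_zero
  have hKi : K⁻¹ = K.det⁻¹ • adjugate K := by rw [inv_def, Ring.inverse_eq_inv]
  have hLi : L⁻¹ = L.det⁻¹ • adjugate L := by rw [inv_def, Ring.inverse_eq_inv]
  refine ⟨?_, ?_, ?_⟩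
  · intro u v
    show K⁻¹ * hat3 (L.mulVec (L.det • (L⁻¹ * K⁻¹ * L⁻¹).mulVec (crossProduct u v))) =
      K⁻¹ * hat3 (L.mulVec u) * (K⁻¹ * hat3 (L.mulVec v)) -
      K⁻¹ * hat3 (L.mulVec v) * (K⁻¹ * hat3 (L.mulVec u))
    rw [mulVec_smul, mulVec_mulVec, show L * (L⁻¹ * K⁻¹ * L⁻¹) = K⁻¹ * L⁻¹ by
      rw [Matrix.mul_assoc L⁻¹, mul_nonsing_inv_cancel_left L _ hLdet]]
    rw [hKi, hLi]
    simp only [Matrix.smul_mul, Matrix.mul_smul, smul_mulVec, hat3_smul, smul_smul]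
    rw [show L.det * (L.det⁻¹ * K.det⁻¹) * K.det⁻¹ = K.det⁻¹ * K.det⁻¹ by
      field_simp]
    rw [core K L k01 k02 k12 l01 l02 l12 u v, smul_sub]
  · intro a b h
    have h' : hat3 (L.mulVec a) = hat3 (L.mulVec b) := by
      have := congrArg (fun M => K * M) h
      simp only [hatK, mul_nonsing_inv_cancel_left _ _ hKdet] at this; exact this
    have h2 : L.mulVec a = L.mulVec b := hat3_inj h'
    have := congrArg (fun x => L⁻¹.mulVec x) h2
    simpa only [mulVec_mulVec, nonsing_inv_mul _ hLdet, one_mulVec] using this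
  · intro ν hν
    set M : Matrix (Fin 3) (Fin 3) ℝ := K * ν with hM
    have hMt : Mᵀ = -M := by
      have : νᵀ * K = -(K * ν) := by linear_combination (norm := noncomm_ring) hν
      rw [hM, transpose_mul, hK, this]
    have e : ∀ i j : Fin 3, M j i = -M i j := by
      intro i j
      have := congrFun (congrFun hMt i) j
      simpa [transpose_apply] using this
    refine ⟨L⁻¹.mulVec ![M 2 1, M 0 2, M 1 0], ?_⟩
    show K⁻¹ * hat3 (L.mulVec (L⁻¹.mulVec ![M 2 1, M 0 2, M 1 0])) = ν
    rw [mulVec_mulVec, mul_nonsing_inv L hLdet, one_mulVec]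
    have hw : hat3 ![M 2 1, M 0 2, M 1 0] = M := by
      refine mat3_ext ?_ ?_ ?_ ?_ ?_ ?_ ?_ ?_ ?_ <;>
        simp [hat3] <;>
        first
          | linarith [e 0 0]
          | linarith [e 1 1]
          | linarith [e 2 2]
          | linarith [e 0 1]
          | linarith [e 0 2]
          | linarith [e 1 2]
    rw [hw, hM, nonsing_inv_mul_cancel_left _ _ hKdet]
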